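/- For every m ≥ 3, β(P_m) ≥ 1/m^{m−2}, where β(P_m) is the supremum over all n and all probability measures μ on the edges of K_n of β(μ; P_m) = ∑_{copies P of P_m in K_n} ∏_{e ∈ E(P)} μ(e). -/

import Mathlib

open Finset
open scoped Classical

/-- A (bounded, nonnegative) measure on the edges of the complete graph `K_n`,
given by a symmetric nonnegative weight function vanishing on the diagonal. -/
structure EdgeMeasure (n : ℕ) where
  w : Fin n → Fin n → ℝ
  symm : ∀ i j, w i j = w j i
  diag : ∀ i, w i i = 0
  nonneg : ∀ i j, 0 ≤ w i j

/-- Total mass of an edge measure (each unordered edge counted once). -/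
noncomputable def mass {n : ℕ} (μ : EdgeMeasure n) : ℝ :=
  (∑ i, ∑ j, μ.w i j) / 2

/-- Weighted degree `μ̄(v)` of a vertex. -/
noncomputable def mubar {n : ℕ} (μ : EdgeMeasure n) (v : Fin n) : ℝ :=
  ∑ u, μ.w v u

/-- The μ-weight of the path traced by a tuple of `m` vertices:
the product of the weights of its `m-1` consecutive edges. -/
noncomputable def pathWt {n m : ℕ} (μ : EdgeMeasure n) (x : Fin m → Fin n) : ℝ :=
  ∏ i : Fin (m - 1),
    μ.w (x ⟨i.1, by have := i.2; omega⟩) (x ⟨i.1 + 1, by have := i.2; omega⟩)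

/-- `β(μ; P_m)`: total μ-weight of the (unlabeled, non-induced) copies of the path
on `m` vertices in `K_n`; each unlabeled copy corresponds to exactly two injective
labeled tuples, whence the division by 2. -/
noncomputable def betaP {n : ℕ} (μ : EdgeMeasure n) (m : ℕ) : ℝ :=
  (∑ x ∈ univ.filter (fun x : Fin m → Fin n => Function.Injective x), pathWt μ x) / 2

/-- `β(P_m)`: the supremum of `β(μ; P_m)` over all `n` and all probability
measures `μ` on the edges of `K_n`. -/
noncomputable def betaPathSup (m : ℕ) : ℝ :=
  sSup {r : ℝ | ∃ n : ℕ, ∃ μ : EdgeMeasure n, mass μ = 1 ∧ r = betaP μ m}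

/-- `β*(μ; P_{(s,t)})` with the path of length `s` starting at vertex `vs` and the
path of length `t` starting at vertex `vt`: each copy of the disjoint union
`P_{s+1} ⊔ P_{t+1}` is recorded by a jointly injective pair of tuples. -/
noncomputable def betaStar {n : ℕ} (μ : EdgeMeasure n) (s t : ℕ) (vs vt : Fin n) : ℝ :=
  ∑ p ∈ univ.filter
      (fun p : (Fin (s + 1) → Fin n) × (Fin (t + 1) → Fin n) =>
        Function.Injective (Sum.elim p.1 p.2) ∧ p.1 0 = vs ∧ p.2 0 = vt),
    pathWt μ p.1 * pathWt μ p.2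

/-- `β*_{w,n}(P_{(s,t)})`: the supremum of `β*(μ; P_{(s,t)})` over all measures of
total mass `w` on the edges of `K_n`, the length-`s` path starting at vertex `n`
(index `n-1`) and the length-`t` path starting at vertex `1` (index `0`). -/
noncomputable def betaStarSupN (w : ℝ) (n s t : ℕ) : ℝ :=
  sSup {r : ℝ | ∃ μ : EdgeMeasure n, mass μ = w ∧
    ∃ h : 0 < n, r = betaStar μ s t ⟨n - 1, by omega⟩ ⟨0, h⟩}

/-- `ρ(μ; m) = ∑_{x ∈ (n)_m} μ̄(x_1) (∏ μ(x_i,x_{i+1})) μ̄(x_m)`, the sum over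
ordered tuples of `m` distinct vertices. -/
noncomputable def rho {n : ℕ} (μ : EdgeMeasure n) (m : ℕ) : ℝ :=
  if h : 0 < m then
    ∑ x ∈ univ.filter (fun x : Fin m → Fin n => Function.Injective x),
      mubar μ (x ⟨0, h⟩) * pathWt μ x * mubar μ (x ⟨m - 1, by omega⟩)
  else 0

/-- `ρ_n(m)`: supremum of `ρ(μ; m)` over probability measures on the edges of `K_n`. -/
noncomputable def rhoN (n m : ℕ) : ℝ :=
  sSup {r : ℝ | ∃ μ : EdgeMeasure n, mass μ = 1 ∧ r = rho μ m}

/-- `ρ(m) = sup_n ρ_n(m)`. -/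
noncomputable def rhoSup (m : ℕ) : ℝ :=
  sSup {r : ℝ | ∃ n : ℕ, r = rhoN n m}

/-- `μ` is the uniform probability measure on the edges of the cycle `C_m` on the
vertices `0, 1, …, m-1` of `K_n`: each cycle edge gets weight `1/m`. -/
def CycleUniform {n : ℕ} (μ : EdgeMeasure n) (m : ℕ) : Prop :=
  ∀ a b : Fin n, μ.w a b =
    (if a.1 < m ∧ b.1 < m ∧ b.1 = (a.1 + 1) % m then (1 : ℝ) / m else 0) +
    (if a.1 < m ∧ b.1 < m ∧ a.1 = (b.1 + 1) % m then (1 : ℝ) / m else 0)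

/-- `deg_P(v)`: the number of edges of the path traced by the tuple `p` that are
incident to the vertex `v`. -/
noncomputable def degTuple {n m : ℕ} (p : Fin m → Fin n) (v : Fin n) : ℕ :=
  ((univ : Finset (Fin (m - 1))).filter (fun i =>
      p ⟨i.1, by have := i.2; omega⟩ = v ∨ p ⟨i.1 + 1, by have := i.2; omega⟩ = v)).card


section AuxStmt3

lemma pathWt_nonneg' {n m : ℕ} (μ : EdgeMeasure n) (x : Fin m → Fin n) : 0 ≤ pathWt μ x :=
  Finset.prod_nonneg fun _ _ => μ.nonneg _ _

/-- Sum of path weights over all tuples is at most total weight to the power `m-1`. -/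
lemma sum_pathWt_le' {n m : ℕ} (hm : 2 ≤ m) (μ : EdgeMeasure n) :
    ∑ x : Fin m → Fin n, pathWt μ x ≤ (∑ i, ∑ j, μ.w i j) ^ (m - 1) := by
  classical
  have hS : (∑ i, ∑ j, μ.w i j) = ∑ p : Fin n × Fin n, μ.w p.1 p.2 := by
    rw [Fintype.sum_prod_type]
  rw [hS, Fintype.sum_pow (fun p : Fin n × Fin n => μ.w p.1 p.2) (m - 1)]
  set e : (Fin m → Fin n) → (Fin (m - 1) → Fin n × Fin n) :=
    fun x i => (x ⟨i.1, by have := i.2; omega⟩, x ⟨i.1 + 1, by have := i.2; omega⟩) with he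
  have einj : Function.Injective e := by
    intro x y hxy
    funext j
    by_cases hj : j.1 < m - 1
    · have h1 := congrArg Prod.fst (congrFun hxy ⟨j.1, hj⟩)
      simpa [he] using h1
    · have hj' : j.1 = m - 1 := by have := j.2; omega
      have h2 := congrArg Prod.snd (congrFun hxy ⟨m - 2, by omega⟩)
      simp only [he] at h2
      have hx : x ⟨m - 2 + 1, by omega⟩ = x j := by
        congr 1; exact Fin.ext (by simp; omega)
      have hy : y ⟨m - 2 + 1, by omega⟩ = y j := by
        congr 1; exact Fin.ext (by simp; omega)
      rw [hx, hy] at h2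
      exact h2
  have hsum : ∑ x : Fin m → Fin n, pathWt μ x
      = ∑ p ∈ Finset.image e Finset.univ, ∏ i, μ.w (p i).1 (p i).2 := by
    rw [Finset.sum_image (fun a _ b _ h => einj h)]
    rfl
  rw [hsum]
  exact Finset.sum_le_sum_of_subset_of_nonneg (Finset.subset_univ _)
    (fun p _ _ => Finset.prod_nonneg fun _ _ => μ.nonneg _ _)

lemma fin_succ_mk' (k : ℕ) (j : ℕ) (hj : j + 1 < k + 3) :
    (⟨j, by omega⟩ : Fin (k+3)) + 1 = ⟨j + 1, hj⟩ := by
  apply Fin.ext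
  rw [Fin.val_add_one_of_lt (by rw [Fin.lt_iff_val_lt_val]; simp [Fin.last]; omega)]

lemma fin_add_ne_sub' (k : ℕ) (a : Fin (k+3)) : a + 1 ≠ a - 1 := by
  intro h
  have h1 : a + 1 + 1 = a := by
    have := congrArg (· + 1) h
    simpa only [sub_add_cancel] using this
  have h2 : a + 2 = a + 0 := by rw [show a + 2 = a + 1 + 1 from by rw [add_assoc]; congr 1, h1, add_zero]
  have := congrArg Fin.val (add_left_cancel h2); simp at this
  rw [Nat.mod_eq_of_lt (by omega : 2 < k + 3)] at this; omega

end AuxStmt3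

section AuxStmt3b

/-- The uniform measure on the edges of the cycle `0, 1, ..., k+2` in `K_{k+3}`. -/
noncomputable def cycleMeasure (k : ℕ) : EdgeMeasure (k+3) where
  w := fun i j => if j = i + 1 ∨ i = j + 1 then (1:ℝ)/((k:ℝ)+3) else 0
  symm := by
    intro i j
    by_cases h : j = i + 1 ∨ i = j + 1
    · rw [if_pos h, if_pos (Or.symm h)]
    · rw [if_neg h, if_neg (fun hc => h (Or.symm hc))]
  diag := by
    intro i
    have hni : ¬ (i = i + 1 ∨ i = i + 1) := by
      rintro (h | h) <;>
      · have h2 : i + 0 = i + 1 := by rw [add_zero]; exact h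
        have := congrArg Fin.val (add_left_cancel h2)
        simp at this
    simp only [if_neg hni]
  nonneg := by
    intro i j
    split_ifs <;> positivity

lemma cycleMeasure_w (k : ℕ) (i j : Fin (k+3)) :
    (cycleMeasure k).w i j = if j = i + 1 ∨ i = j + 1 then (1:ℝ)/((k:ℝ)+3) else 0 := rfl

lemma mass_cycleMeasure (k : ℕ) : mass (cycleMeasure k) = 1 := by
  have hx : (0:ℝ) < (k:ℝ) + 3 := by positivity
  have hrow : ∀ i : Fin (k+3), ∑ j, (cycleMeasure k).w i j = 2/((k:ℝ)+3) := by
    intro i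
    have hwij : ∀ j : Fin (k+3), (cycleMeasure k).w i j =
        (if j = i + 1 then (1:ℝ)/((k:ℝ)+3) else 0) +
        (if j = i - 1 then (1:ℝ)/((k:ℝ)+3) else 0) := by
      intro j
      rw [cycleMeasure_w]
      have hiff : i = j + 1 ↔ j = i - 1 := by
        constructor
        · intro h; rw [h, add_sub_cancel_right]
        · intro h; rw [h, sub_add_cancel]
      by_cases h1 : j = i + 1
      · have h2 : ¬ j = i - 1 := fun h2 => fin_add_ne_sub' k i (h1.symm.trans h2)
        rw [if_pos (Or.inl h1), if_pos h1, if_neg h2, add_zero]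
      · by_cases h2 : j = i - 1
        · rw [if_pos (Or.inr (hiff.mpr h2)), if_neg h1, if_pos h2, zero_add]
        · rw [if_neg ?_, if_neg h1, if_neg h2, add_zero]
          rintro (h | h)
          · exact h1 h
          · exact h2 (hiff.mp h)
    rw [Finset.sum_congr rfl (fun j _ => hwij j), Finset.sum_add_distrib,
      Finset.sum_ite_eq' Finset.univ (i+1) (fun _ => (1:ℝ)/((k:ℝ)+3)),
      Finset.sum_ite_eq' Finset.univ (i-1) (fun _ => (1:ℝ)/((k:ℝ)+3))]
    simp only [Finset.mem_univ, if_pos]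
    ring
  unfold mass
  rw [Finset.sum_congr rfl (fun i _ => hrow i), Finset.sum_const]
  simp only [Finset.card_univ, Fintype.card_fin, nsmul_eq_mul]
  push_cast
  field_simp

/-- The `2(k+3)` directed hamiltonian paths of the cycle, as tuples. -/
noncomputable def cycF (k : ℕ) : Fin (k+3) × Bool → (Fin (k+3) → Fin (k+3))
  | (a, true) => fun i => a + i
  | (a, false) => fun i => a - i

lemma cycF_apply_injective (k : ℕ) (p : Fin (k+3) × Bool) :
    Function.Injective (cycF k p) := by
  obtain ⟨a, b⟩ := p
  cases b
  · intro i j h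
    exact sub_right_injective h
  · intro i j h
    exact add_right_injective a h

lemma cycF_injective (k : ℕ) : Function.Injective (cycF k) := by
  rintro ⟨a, b⟩ ⟨a', b'⟩ hab
  have h0 := congrFun hab 0
  have ha : a = a' := by cases b <;> cases b' <;> simpa [cycF] using h0
  subst ha
  have h1 := congrFun hab 1
  cases b <;> cases b'
  · rfl
  · exact absurd (show a + 1 = a - 1 from h1.symm) (fin_add_ne_sub' k a)
  · exact absurd (show a + 1 = a - 1 from h1) (fin_add_ne_sub' k a)
  · rfl

lemma pathWt_cycF (k : ℕ) (p : Fin (k+3) × Bool) :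
    pathWt (cycleMeasure k) (cycF k p) = (1/((k:ℝ)+3))^(k+2) := by
  obtain ⟨a, b⟩ := p
  have hfac : ∀ i : Fin (k+3-1),
      (cycleMeasure k).w (cycF k (a, b) ⟨i.1, by have := i.2; omega⟩)
        (cycF k (a, b) ⟨i.1+1, by have := i.2; omega⟩) = 1/((k:ℝ)+3) := by
    intro i
    have hstep : (⟨i.1 + 1, by have := i.2; omega⟩ : Fin (k+3))
        = (⟨i.1, by have := i.2; omega⟩ : Fin (k+3)) + 1 :=
      (fin_succ_mk' k i.1 (by have := i.2; omega)).symm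
    cases b
    · have hc : a - (⟨i.1, by have := i.2; omega⟩ : Fin (k+3))
          = a - (⟨i.1+1, by have := i.2; omega⟩ : Fin (k+3)) + 1 := by
        rw [hstep]; abel
      show (cycleMeasure k).w (a - ⟨i.1, by have := i.2; omega⟩)
          (a - ⟨i.1+1, by have := i.2; omega⟩) = 1/((k:ℝ)+3)
      rw [cycleMeasure_w, if_pos (Or.inr hc)]
    · have hc : a + (⟨i.1+1, by have := i.2; omega⟩ : Fin (k+3))
          = a + (⟨i.1, by have := i.2; omega⟩ : Fin (k+3)) + 1 := by
        rw [hstep]; abel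
      show (cycleMeasure k).w (a + ⟨i.1, by have := i.2; omega⟩)
          (a + ⟨i.1+1, by have := i.2; omega⟩) = 1/((k:ℝ)+3)
      rw [cycleMeasure_w, if_pos (Or.inl hc)]
  unfold pathWt
  rw [Finset.prod_congr rfl (fun i _ => hfac i), Finset.prod_const]
  congr 1
  simp

end AuxStmt3b

/-- For every `m ≥ 3`, `β(P_m) ≥ 1/m^(m-2)`. -/
theorem stmt3 (m : ℕ) (hm : 3 ≤ m) :
    1 / (m : ℝ) ^ (m - 2) ≤ betaPathSup m := by
  classical
  obtain ⟨k, rfl⟩ : ∃ k, m = k + 3 := ⟨m - 3, by omega⟩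
  have hx : (0:ℝ) < (k:ℝ) + 3 := by positivity
  set μ0 := cycleMeasure k with hμ0
  -- lower bound on the key sum
  have hsum_lb : (2*((k:ℝ)+3)) * (1/((k:ℝ)+3))^(k+2)
      ≤ ∑ x ∈ Finset.univ.filter
          (fun x : Fin (k+3) → Fin (k+3) => Function.Injective x), pathWt μ0 x := by
    have himg : Finset.image (cycF k) Finset.univ ⊆
        Finset.univ.filter (fun x : Fin (k+3) → Fin (k+3) => Function.Injective x) := by
      intro x hx
      simp only [Finset.mem_image] at hx
      obtain ⟨p, _, rfl⟩ := hx
      simp [Finset.mem_filter, cycF_apply_injective k p]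
    calc (2*((k:ℝ)+3)) * (1/((k:ℝ)+3))^(k+2)
        = ∑ p : Fin (k+3) × Bool, pathWt μ0 (cycF k p) := by
          rw [Finset.sum_congr rfl (fun p _ => pathWt_cycF k p), Finset.sum_const]
          simp only [Finset.card_univ, Fintype.card_prod, Fintype.card_fin,
            Fintype.card_bool, nsmul_eq_mul]
          push_cast
          ring
      _ = ∑ x ∈ Finset.image (cycF k) Finset.univ, pathWt μ0 x :=
          (Finset.sum_image (fun a _ b _ h => cycF_injective k h)).symm
      _ ≤ _ := Finset.sum_le_sum_of_subset_of_nonneg himg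
          (fun _ _ _ => pathWt_nonneg' μ0 _)
  -- the set is bounded above
  have hbdd : BddAbove {r : ℝ | ∃ n : ℕ, ∃ μ : EdgeMeasure n,
      mass μ = 1 ∧ r = betaP μ (k+3)} := by
    refine ⟨(2:ℝ)^(k+3-1)/2, ?_⟩
    rintro r ⟨n, μ, hμ, rfl⟩
    have hS : (∑ i, ∑ j, μ.w i j) = 2 := by
      unfold mass at hμ; linarith
    have h1 : ∑ x ∈ Finset.univ.filter
        (fun x : Fin (k+3) → Fin n => Function.Injective x), pathWt μ x
        ≤ ∑ x : Fin (k+3) → Fin n, pathWt μ x :=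
      Finset.sum_le_sum_of_subset_of_nonneg (Finset.filter_subset _ _)
        (fun x _ _ => pathWt_nonneg' μ x)
    have h2 := sum_pathWt_le' (n := n) (m := k+3) (by omega) μ
    rw [hS] at h2
    have h3 := h1.trans h2
    unfold betaP
    linarith
  have hmem : betaP μ0 (k+3) ∈ {r : ℝ | ∃ n : ℕ, ∃ μ : EdgeMeasure n,
      mass μ = 1 ∧ r = betaP μ (k+3)} := ⟨k+3, μ0, mass_cycleMeasure k, rfl⟩
  have hle := le_csSup hbdd hmem
  refine le_trans ?_ hle
  have hcast : (((k+3 : ℕ) : ℝ)) = (k:ℝ)+3 := by push_cast; ring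
  rw [hcast]
  show 1/((k:ℝ)+3)^(k+1) ≤ betaP μ0 (k+3)
  have hgoal : 1/((k:ℝ)+3)^(k+1) = (2*((k:ℝ)+3)) * (1/((k:ℝ)+3))^(k+2) / 2 := by
    rw [one_div_pow, pow_succ ((k:ℝ)+3) (k+1)]
    field_simp
  unfold betaP
  linarith
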